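/- Let ψ:(0,∞)→(0,∞) be non-decreasing with ∫₀^r s/ψ(s) ds < ∞ for every r>0, and let Φ(r) := r²/(2∫₀^r s/ψ(s) ds). Let a∈(0,∞], β̂>0 and C≥1. If ψ satisfies U_a(β̂,C), then Φ satisfies U_a(min(β̂,2), C). -/

import Mathlib

open MeasureTheory Set
open scoped ENNReal

/-- Let `ψ : (0,∞) → (0,∞)` be non-decreasing with
`∫₀^r s/ψ(s) ds < ∞` for every `r > 0`, and `Φ(r) = r²/(2∫₀^r s/ψ(s) ds)`.
Let `a ∈ (0,∞]`, `β̂ > 0`, `C ≥ 1`.  If `ψ` satisfies `U_a(β̂, C)`, then `Φ`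
satisfies `U_a(min(β̂,2), C)`. -/
theorem stmt_5 (ψ Φ : ℝ → ℝ)
    (hψ_pos : ∀ r : ℝ, 0 < r → 0 < ψ r)
    (hψ_mono : ∀ r s : ℝ, 0 < r → r ≤ s → ψ r ≤ ψ s)
    (hψ_int : ∀ r : ℝ, 0 < r → IntegrableOn (fun s => s / ψ s) (Ioo 0 r))
    (hΦ : ∀ r : ℝ, 0 < r → Φ r = r ^ 2 / (2 * ∫ s in Ioo (0:ℝ) r, s / ψ s))
    (a : ℝ≥0∞) (ha : 0 < a) (β' C : ℝ) (hβ' : 0 < β') (hC : 1 ≤ C)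
    (hU : ∀ r R : ℝ, 0 < r → r ≤ R → ENNReal.ofReal R < a →
      ψ R / ψ r ≤ C * (R / r) ^ β') :
    ∀ r R : ℝ, 0 < r → r ≤ R → ENNReal.ofReal R < a →
      Φ R / Φ r ≤ C * (R / r) ^ (min β' 2) := by
  intro r R hr hrR hRa
  have hR : 0 < R := lt_of_lt_of_le hr hrR
  have hC0 : (0:ℝ) < C := lt_of_lt_of_le one_pos hC
  set f : ℝ → ℝ := fun s => s / ψ s with hf
  -- interval integrability
  have hII : ∀ t : ℝ, 0 < t → IntervalIntegrable f volume 0 t := by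
    intro t ht
    rw [intervalIntegrable_iff_integrableOn_Ioo_of_le ht.le]
    exact hψ_int t ht
  -- Ioo integral equals interval integral
  have hIoo : ∀ t : ℝ, 0 < t →
      (∫ s in Ioo (0:ℝ) t, s / ψ s) = ∫ s in (0:ℝ)..t, f s := by
    intro t ht
    rw [intervalIntegral.integral_of_le ht.le, integral_Ioc_eq_integral_Ioo]
  set Jr : ℝ := ∫ s in (0:ℝ)..r, f s with hJr
  set JR : ℝ := ∫ s in (0:ℝ)..R, f s with hJR
  -- positivity of the integrals
  have hJpos : ∀ t : ℝ, 0 < t → ENNReal.ofReal t < a → 0 < ∫ s in (0:ℝ)..t, f s := by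
    intro t ht hta
    refine intervalIntegral.intervalIntegral_pos_of_pos_on (hII t ht) ?_ ht
    intro x hx
    exact div_pos hx.1 (hψ_pos x hx.1)
  have hra : ENNReal.ofReal r < a :=
    lt_of_le_of_lt (ENNReal.ofReal_le_ofReal hrR) hRa
  have hJrpos : 0 < Jr := hJpos r hr hra
  have hJRpos : 0 < JR := hJpos R hR hRa
  set k : ℝ := R / r with hk
  have hk0 : 0 < k := div_pos hR hr
  have hk1 : 1 ≤ k := (one_le_div hr).mpr hrR
  have hkr : k * r = R := div_mul_cancel₀ R (ne_of_gt hr)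
  -- the key inequality:  R^2 * Jr ≤ C * k^m * (JR * r^2)  where m = min β' 2
  have key : R ^ 2 * Jr ≤ C * k ^ (min β' 2) * (JR * r ^ 2) := by
    rcases le_total β' 2 with hb2 | hb2
    · -- case β' ≤ 2 : use scaling substitution
      rw [min_eq_left hb2]
      set c0 : ℝ := k ^ ((1:ℝ) - β') / C with hc0
      have hc0pos : 0 < c0 := div_pos (Real.rpow_pos_of_pos hk0 _) hC0
      -- pointwise bound on Icc 0 r : c0 * f x ≤ f (k * x)
      have hpt : ∀ x ∈ Icc (0:ℝ) r, c0 * f x ≤ f (k * x) := by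
        intro x hx
        rcases eq_or_lt_of_le hx.1 with h0 | h0
        · simp [hf, ← h0]
        · have hxa : ENNReal.ofReal (k * x) < a := by
            refine lt_of_le_of_lt (ENNReal.ofReal_le_ofReal ?_) hRa
            calc k * x ≤ k * r := by nlinarith [hx.2]
              _ = R := hkr
          have hxkx : x ≤ k * x := by nlinarith
          have hUx := hU x (k * x) h0 hxkx hxa
          have hψx : 0 < ψ x := hψ_pos x h0
          have hψkx : 0 < ψ (k * x) := hψ_pos _ (by nlinarith)
          have hkxq : (k * x) / x = k := by field_simp
          rw [hkxq] at hUx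
          have hψbound : ψ (k * x) ≤ C * k ^ β' * ψ x := by
            rw [div_le_iff₀ hψx] at hUx; linarith
          have hden : 0 < C * k ^ β' * ψ x := by positivity
          have h1 : (k * x) / (C * k ^ β' * ψ x) ≤ (k * x) / ψ (k * x) :=
            div_le_div_of_nonneg_left (by positivity) hψkx hψbound
          have h2 : c0 * (x / ψ x) = (k * x) / (C * k ^ β' * ψ x) := by
            have hkbne : k ^ β' ≠ 0 := ne_of_gt (Real.rpow_pos_of_pos hk0 _)
            rw [hc0, Real.rpow_sub hk0, Real.rpow_one]
            field_simp
          calc c0 * f x = (k * x) / (C * k ^ β' * ψ x) := h2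
            _ ≤ f (k * x) := h1
      -- integrability of both sides
      have hI1 : IntervalIntegrable (fun x => c0 * f x) volume 0 r :=
        (hII r hr).const_mul c0
      have hI2 : IntervalIntegrable (fun x => f (k * x)) volume 0 r := by
        have hRk : R / k = r := by
          rw [hk]
          field_simp
        have := (hII R hR).comp_mul_left (c := k)
        rw [zero_div, hRk] at this
        exact this
      have hmono := intervalIntegral.integral_mono_on hr.le hI1 hI2 hpt
      rw [intervalIntegral.integral_const_mul, ← hJr] at hmono
      -- substitution: JR = k * ∫ f (k x)
      have hsub : (∫ x in (0:ℝ)..r, f (k * x)) = k⁻¹ * JR := by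
        rw [intervalIntegral.integral_comp_mul_left f (ne_of_gt hk0)]
        rw [mul_zero, hkr]
        simp [hJR]
      rw [hsub] at hmono
      -- so c0 * Jr ≤ k⁻¹ * JR, i.e. k * c0 * Jr ≤ JR
      have hstep : k ^ ((2:ℝ) - β') / C * Jr ≤ JR := by
        have h3 : k * (c0 * Jr) ≤ k * (k⁻¹ * JR) :=
          mul_le_mul_of_nonneg_left hmono hk0.le
        have h3' : k * (k⁻¹ * JR) = JR := by
          field_simp
        have h4 : k * c0 = k ^ ((2:ℝ) - β') / C := by
          rw [hc0, mul_div_assoc']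
          congr 1
          rw [show (2:ℝ) - β' = 1 + (1 - β') by ring, Real.rpow_add hk0, Real.rpow_one]
        calc k ^ ((2:ℝ) - β') / C * Jr = k * (c0 * Jr) := by rw [← h4]; ring
          _ ≤ k * (k⁻¹ * JR) := h3
          _ = JR := h3'
      -- conclude
      have e1 : k ^ ((2:ℝ) - β') * k ^ β' = k ^ (2:ℝ) := by
        rw [← Real.rpow_add hk0]
        congr 1
        ring
      have e2 : k ^ (2:ℝ) = R ^ 2 / r ^ 2 := by
        rw [show ((2:ℝ)) = ((2:ℕ):ℝ) by norm_num, Real.rpow_natCast, hk, div_pow]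
      have hkb : 0 < k ^ β' := Real.rpow_pos_of_pos hk0 _
      have h5 : k ^ ((2:ℝ) - β') / C * Jr * (C * k ^ β') ≤ JR * (C * k ^ β') :=
        mul_le_mul_of_nonneg_right hstep (by positivity)
      have h6 : k ^ ((2:ℝ) - β') / C * Jr * (C * k ^ β') = k ^ (2:ℝ) * Jr := by
        rw [← e1]
        field_simp
      rw [h6, e2] at h5
      have h7 : R ^ 2 / r ^ 2 * Jr * r ^ 2 ≤ JR * (C * k ^ β') * r ^ 2 :=
        mul_le_mul_of_nonneg_right h5 (by positivity)
      have h8 : R ^ 2 / r ^ 2 * Jr * r ^ 2 = R ^ 2 * Jr := by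
        field_simp
      rw [h8] at h7
      nlinarith [h7]
    · -- case 2 ≤ β' : use monotonicity of the integral
      rw [min_eq_right hb2]
      have hJmono : Jr ≤ JR := by
        have hIrR : IntervalIntegrable f volume r R := by
          rcases eq_or_lt_of_le hrR with h | h
          · rw [h]
          · rw [intervalIntegrable_iff_integrableOn_Ioo_of_le hrR]
            exact (hψ_int R hR).mono_set (Ioo_subset_Ioo hr.le le_rfl)
        have hadd := intervalIntegral.integral_add_adjacent_intervals (hII r hr) hIrR
        have hnn : 0 ≤ ∫ x in r..R, f x := by
          refine intervalIntegral.integral_nonneg hrR ?_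
          intro x hx
          exact div_nonneg (le_trans hr.le hx.1) (hψ_pos x (lt_of_lt_of_le hr hx.1)).le
        rw [hJr, hJR, ← hadd]
        linarith
      have e2 : k ^ (2:ℝ) = R ^ 2 / r ^ 2 := by
        rw [show ((2:ℝ)) = ((2:ℕ):ℝ) by norm_num, Real.rpow_natCast, hk, div_pow]
      have : C * k ^ (2:ℝ) * (JR * r ^ 2) = C * R ^ 2 * JR := by
        rw [e2]; field_simp
      rw [this]
      calc R ^ 2 * Jr ≤ R ^ 2 * JR := mul_le_mul_of_nonneg_left hJmono (sq_nonneg R)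
        _ ≤ C * R ^ 2 * JR := by
            nlinarith [mul_nonneg (sub_nonneg.mpr hC) (mul_nonneg (sq_nonneg R) hJRpos.le)]
  -- now derive the conclusion from `key`
  rw [hΦ R hR, hΦ r hr, hIoo R hR, hIoo r hr, ← hJr, ← hJR]
  have hB : (0:ℝ) < r ^ 2 / (2 * Jr) := by positivity
  rw [div_le_iff₀ hB, div_le_iff₀ (by positivity : (0:ℝ) < 2 * JR)]
  have heq : C * k ^ (min β' 2) * (r ^ 2 / (2 * Jr)) * (2 * JR)
      = C * k ^ (min β' 2) * (JR * r ^ 2) / Jr := by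
    field_simp
  rw [heq, le_div_iff₀ hJrpos]
  linarith [key]
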